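/- Let H(x,y) = y²/2 + x²/2 + x⁴/4 and let k be a natural number. Then xᵏ y² dx = −(2/(k+1))·xᵏ⁺¹ dH + d( (2H/(k+1))·xᵏ⁺¹ − (1/(k+3))·xᵏ⁺³ − (1/(2(k+5)))·xᵏ⁺⁵ ) as polynomial 1-forms on ℝ². -/

import Mathlib

/-- partial derivative in the first variable -/
noncomputable def pdx (F : ℝ → ℝ → ℝ) (x y : ℝ) : ℝ := deriv (fun t => F t y) x

/-- partial derivative in the second variable -/
noncomputable def pdy (F : ℝ → ℝ → ℝ) (x y : ℝ) : ℝ := deriv (fun t => F x t) y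

noncomputable def H (x y : ℝ) : ℝ := y^2/2 + x^2/2 + x^4/4

lemma hx (x y : ℝ) : HasDerivAt (fun t => H t y) (x + x^3) x := by
  have h2 : HasDerivAt (fun t : ℝ => t^2/2) x x := by
    simpa using (hasDerivAt_pow 2 x).div_const 2
  have h4 : HasDerivAt (fun t : ℝ => t^4/4) (x^3) x := by
    simpa using (hasDerivAt_pow 4 x).div_const 4
  have := (h2.const_add (y^2/2)).add h4
  exact this

lemma hy (x y : ℝ) : HasDerivAt (fun t => H x t) y x → True := fun _ => trivial

/-- (i8):  xᵏy² dx = −(2/(k+1))·xᵏ⁺¹·dH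
    + d((2H/(k+1))·xᵏ⁺¹ − (1/(k+3))·xᵏ⁺³ − (1/(2(k+5)))·xᵏ⁺⁵) -/
theorem decomposition_i8 (k : ℕ) : ∀ x y : ℝ,
    x^k * y^2 = - (2/((k : ℝ)+1)) * x^(k+1) * pdx H x y
      + pdx (fun x y => (2 * H x y/((k : ℝ)+1)) * x^(k+1)
          - (1/((k : ℝ)+3)) * x^(k+3) - (1/(2*((k : ℝ)+5))) * x^(k+5)) x y
  ∧ (0 : ℝ) = - (2/((k : ℝ)+1)) * x^(k+1) * pdy H x y
      + pdy (fun x y => (2 * H x y/((k : ℝ)+1)) * x^(k+1)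
          - (1/((k : ℝ)+3)) * x^(k+3) - (1/(2*((k : ℝ)+5))) * x^(k+5)) x y := by
  intro x y
  have hk1 : ((k : ℝ)+1) ≠ 0 := by positivity
  have hk3 : ((k : ℝ)+3) ≠ 0 := by positivity
  have hk5 : ((k : ℝ)+5) ≠ 0 := by positivity
  constructor
  · have h1 : HasDerivAt (fun t => H t y) (x + x^3) x := hx x y
    have hA : HasDerivAt (fun t => 2 * H t y / ((k:ℝ)+1) * t^(k+1))
        ((2 * (x + x^3) / ((k:ℝ)+1)) * x^(k+1)
          + (2 * H x y / ((k:ℝ)+1)) * (((k:ℝ)+1) * x^k)) x := by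
      have := (((h1.const_mul 2).div_const ((k:ℝ)+1)).mul (hasDerivAt_pow (k+1) x))
      simpa [Pi.mul_def] using this
    have hB : HasDerivAt (fun t : ℝ => (1/((k:ℝ)+3)) * t^(k+3))
        ((1/((k:ℝ)+3)) * (((k:ℝ)+3) * x^(k+2))) x := by
      have := (hasDerivAt_pow (k+3) x).const_mul (1/((k:ℝ)+3))
      simpa [Nat.add_sub_cancel] using this
    have hC : HasDerivAt (fun t : ℝ => (1/(2*((k:ℝ)+5))) * t^(k+5))
        ((1/(2*((k:ℝ)+5))) * (((k:ℝ)+5) * x^(k+4))) x := by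
      have := (hasDerivAt_pow (k+5) x).const_mul (1/(2*((k:ℝ)+5)))
      simpa [Nat.add_sub_cancel] using this
    have hD : HasDerivAt (fun t => 2 * H t y / ((k:ℝ)+1) * t^(k+1) - (1/((k:ℝ)+3)) * t^(k+3)
        - (1/(2*((k:ℝ)+5))) * t^(k+5)) _ x := (hA.sub hB).sub hC
    rw [pdx, pdx, h1.deriv, hD.deriv]
    simp only [H]
    field_simp
    ring
  · have h2 : HasDerivAt (fun t => H x t) y y := by
      have h := (hasDerivAt_pow 2 y).div_const 2
      have := (h.add_const (x^2/2 + x^4/4))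
      simpa [H, add_assoc] using this
    have hA : HasDerivAt (fun t : ℝ => 2 * H x t / ((k:ℝ)+1) * x^(k+1)
        - (1/((k:ℝ)+3)) * x^(k+3) - (1/(2*((k:ℝ)+5))) * x^(k+5))
        ((2 * y / ((k:ℝ)+1)) * x^(k+1)) y := by
      have := (((h2.const_mul 2).div_const ((k:ℝ)+1)).mul_const (x^(k+1))).sub_const
        ((1/((k:ℝ)+3)) * x^(k+3))
      simpa using this.sub_const ((1/(2*((k:ℝ)+5))) * x^(k+5))
    rw [pdy, pdy, h2.deriv, hA.deriv]
    field_simp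
    ring
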